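/- For a finite block B of positive integers of length n, the denominators of B and its reversal satisfy q_i(B)·q_{n−i}(B*) + q_{i−1}(B)·q_{n−i−1}(B*) = q(B) for all 0 ≤ i ≤ n. -/

import Mathlib

/-- The value `[0; a₁, …, aₙ]` of a finite block of positive integer CF digits. -/
def cfVal : List ℕ+ → ℚ
  | [] => 0
  | a :: t => 1 / (((a : ℕ) : ℚ) + cfVal t)

/-- `qI B i = q_i(B)`: the denominator in lowest terms of the `i`-th convergent
`[0; a₁, …, a_i]` of the block `B`. -/
def qI (B : List ℕ+) (i : ℕ) : ℕ := (cfVal (B.take i)).den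

/-- `qm B i = q_{i-1}(B)`, with the convention `q₋₁ = 0`. -/
def qm (B : List ℕ+) : ℕ → ℕ
  | 0 => 0
  | i + 1 => qI B i

/-- The continuant matrix of a block. -/
def cfM (L : List ℕ+) : Matrix (Fin 2) (Fin 2) ℕ :=
  (L.map fun a => !![(a : ℕ), 1; 1, 0]).prod

@[simp] lemma cfM_nil : cfM [] = 1 := rfl

lemma cfM_cons (a : ℕ+) (t : List ℕ+) : cfM (a :: t) = !![(a : ℕ), 1; 1, 0] * cfM t := by
  simp [cfM]

lemma cfM_append (X Y : List ℕ+) : cfM (X ++ Y) = cfM X * cfM Y := by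
  simp [cfM]

lemma cfVal_nonneg (L : List ℕ+) : 0 ≤ cfVal L := by
  induction L with
  | nil => simp [cfVal]
  | cons a t ih =>
    show (0 : ℚ) ≤ 1 / (((a : ℕ) : ℚ) + cfVal t)
    positivity

lemma cfVal_den_num (L : List ℕ+) :
    (cfVal L).den = cfM L 0 0 ∧ (cfVal L).num = cfM L 1 0 := by
  induction L with
  | nil => simp [cfVal, cfM]
  | cons a t ih =>
    obtain ⟨hd, hn⟩ := ih
    set q : ℕ := (cfVal t).den with hq
    set p : ℤ := (cfVal t).num with hp
    have hp0 : 0 ≤ p := Rat.num_nonneg.2 (cfVal_nonneg t)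
    have hq0 : 0 < q := (cfVal t).pos
    have hcop : Nat.Coprime p.natAbs q := (cfVal t).reduced
    have hval : cfVal (a :: t) = ((q : ℤ) : ℚ) / (((a : ℕ) * q + p : ℤ) : ℚ) := by
      have ht : cfVal t = (p : ℚ) / (q : ℚ) := (Rat.num_div_den _).symm
      show 1 / (((a : ℕ) : ℚ) + cfVal t) = _
      rw [ht]
      have hqQ : ((q : ℤ) : ℚ) ≠ 0 := by positivity
      field_simp
      push_cast; ring
    obtain ⟨m, hm⟩ : ∃ m : ℕ, ((a : ℕ) * q + p : ℤ) = (m : ℤ) + p :=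
      ⟨(a : ℕ) * q, by push_cast; ring⟩
    have hbig : (0 : ℤ) < (a : ℕ) * q + p := by
      have h1 : (1 : ℤ) ≤ (a : ℕ) := by exact_mod_cast a.one_le
      have h1q : (1 : ℤ) ≤ (q : ℤ) := by exact_mod_cast hq0
      nlinarith
    have hcq : Nat.Coprime q p.toNat := by
      have hpn : p.natAbs = p.toNat := by omega
      rw [← hpn]; exact hcop.symm
    have hcop2 : Nat.Coprime (q : ℤ).natAbs ((a : ℕ) * q + p).natAbs := by
      have hdvd : (q : ℤ) ∣ (m : ℤ) := ⟨(a : ℕ), by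
        have : (m : ℤ) = (a : ℕ) * q := by omega
        rw [this]; ring⟩
      have hqm : q ∣ m := by exact_mod_cast hdvd
      have habs : ((a : ℕ) * q + p).natAbs = m + p.toNat := by omega
      rw [habs]
      simp only [Int.natAbs_natCast]
      obtain ⟨c, hc⟩ := hqm
      rw [hc, add_comm]
      exact (Nat.coprime_add_mul_left_right q p.toNat c).2 hcq
    have hden := Rat.den_div_eq_of_coprime hbig hcop2
    have hnum := Rat.num_div_eq_of_coprime hbig hcop2
    rw [← hval] at hden hnum
    constructor
    · have hM : cfM (a :: t) 0 0 = (a : ℕ) * cfM t 0 0 + cfM t 1 0 := by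
        rw [cfM_cons, Matrix.mul_apply, Fin.sum_univ_two]; simp
      have hmq : m = (a : ℕ) * q := by
        have h' : (m : ℤ) = ((a : ℕ) : ℤ) * (q : ℤ) := by linarith [hm]
        exact_mod_cast h'
      have hden' : (cfVal (a :: t)).den = m + cfM t 1 0 := by
        have h2 : ((cfVal (a :: t)).den : ℤ) = (m : ℤ) + ((cfM t 1 0 : ℕ) : ℤ) := by
          rw [hden, hm, ← hn]
        exact_mod_cast h2
      rw [hM, hden', hmq, hd]
    · have hM2 : cfM (a :: t) 1 0 = cfM t 0 0 := by
        rw [cfM_cons, Matrix.mul_apply, Fin.sum_univ_two]; simp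
      rw [hnum, hM2, ← hd]

lemma cfVal_den (L : List ℕ+) : (cfVal L).den = cfM L 0 0 := (cfVal_den_num L).1

lemma cfM_reverse (L : List ℕ+) : cfM L.reverse = (cfM L).transpose := by
  induction L with
  | nil => simp [Matrix.transpose_one]
  | cons a t ih =>
    have hs : cfM [a] = (!![(a : ℕ), 1; 1, 0]).transpose := by
      ext i j; fin_cases i <;> fin_cases j <;> simp [cfM]
    rw [List.reverse_cons, cfM_append, ih, hs, ← Matrix.transpose_mul, ← cfM_cons]

lemma cfM_concat_01 (L : List ℕ+) (a : ℕ+) : cfM (L ++ [a]) 0 1 = cfM L 0 0 := by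
  rw [cfM_append, Matrix.mul_apply, Fin.sum_univ_two]
  have h1 : cfM [a] 0 1 = 1 := by simp [cfM]
  have h2 : cfM [a] 1 1 = 0 := by simp [cfM]
  rw [h1, h2]
  ring

lemma qI_eq (B : List ℕ+) (i : ℕ) : qI B i = cfM (B.take i) 0 0 := by
  rw [qI, cfVal_den]

lemma qm_eq (B : List ℕ+) (i : ℕ) (h : i ≤ B.length) : qm B i = cfM (B.take i) 0 1 := by
  cases i with
  | zero => simp [qm, cfM]
  | succ j =>
    have hj : j < B.length := h
    have htake : B.take (j + 1) = B.take j ++ [B.get ⟨j, hj⟩] := by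
      rw [← List.take_concat_get hj, List.concat_eq_append]
      simp
    rw [qm, qI_eq, htake, cfM_concat_01]

/-- For a block `B` of length `n` with reversal `B*`:
`q_i(B)·q_{n−i}(B*) + q_{i−1}(B)·q_{n−i−1}(B*) = q(B)` for all `0 ≤ i ≤ n`. -/
theorem cf_reversal_denominator_identity (B : List ℕ+) :
    ∀ i ≤ B.length,
      qI B i * qI B.reverse (B.length - i) + qm B i * qm B.reverse (B.length - i)
        = qI B B.length := by
  intro i hi
  have hrevlen : (B.length - i) ≤ B.reverse.length := by simp
  rw [qI_eq, qI_eq, qI_eq, qm_eq B i hi, qm_eq B.reverse _ hrevlen]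
  have htr : B.reverse.take (B.length - i) = (B.drop i).reverse := by
    have hii : B.length - (B.length - i) = i := by omega
    rw [List.take_reverse, hii]
  rw [htr, cfM_reverse, List.take_length]
  have hsplit : cfM B = cfM (B.take i) * cfM (B.drop i) := by
    rw [← cfM_append, List.take_append_drop]
  rw [hsplit, Matrix.mul_apply, Fin.sum_univ_two]
  simp [Matrix.transpose_apply]
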